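/- (Theorem 4, invariant form.) Let N be a finite set of voters, 𝒞 an M-winning coalition set on N, and S = (S_1,…,S_K) a sequence of nonempty, pairwise distinct subsets of N with S_K a singleton, such that for every C ∈ 𝒞 there exists k ∈ {1,…,K} with S_k ⊆ C and S_l ∩ C ≠ ∅ for all l < k (the property guaranteed of every output of Algorithm 1 on 𝒞). Then for every neutral and strategy-proof full-domain rule f and every full profile R̃ : N → Option Bool, 𝒞^f R̃ = 𝒮^f R̃. -/
import Mathlib


/-- A rule is strategy-proof if whenever a voter's misreport would give his true
preference, truthful reporting gives it as well. -/
def StrategyProof {N : Type*} [DecidableEq N] (f : (N → Bool) → Bool) : Prop :=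
  ∀ (R : N → Bool) (i : N) (b : Bool), f (Function.update R i b) = R i → f R = R i

/-- A rule is neutral if it commutes with flipping the two candidates. -/
def Neutral {N : Type*} (f : (N → Bool) → Bool) : Prop :=
  ∀ R : N → Bool, f (fun i => !(R i)) = !(f R)

/-- An M-winning coalition set: nonempty, members nonempty, minimality (P1),
and Moulin's property (P2). -/
def IsMWCS {N : Type*} [DecidableEq N] (𝒞 : Set (Finset N)) : Prop :=
  𝒞.Nonempty ∧ (∀ C ∈ 𝒞, C.Nonempty) ∧
    (∀ C ∈ 𝒞, ∀ C' ∈ 𝒞, C ⊆ C' → C = C') ∧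
    (∀ C : Finset N, (∃ C' ∈ 𝒞, C' ⊆ C) ↔ ∀ C'' ∈ 𝒞, (C ∩ C'').Nonempty)

/-- `f` is the M-winning coalition rule associated with `𝒞`. -/
def IsMWCRule {N : Type*} (𝒞 : Set (Finset N)) (f : (N → Bool) → Bool) : Prop :=
  ∀ (R : N → Bool) (x : Bool), f R = x ↔ ∃ C ∈ 𝒞, ∀ i ∈ C, R i = x

/-- `g` is the sequential unanimity rule associated with the sequence `S`. -/
def IsSURule {N : Type*} {K : ℕ} (S : Fin K → Finset N) (g : (N → Bool) → Bool) : Prop :=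
  ∀ (R : N → Bool) (x : Bool),
    g R = x ↔ ∃ k : Fin K, (∀ i ∈ S k, R i = x) ∧
      ∀ l < k, ∃ i ∈ S l, ∃ j ∈ S l, R i ≠ R j

/-- A full-domain rule is neutral if it commutes with flipping the two candidates
(indifference/ties are mapped to themselves). -/
def FullNeutral {N : Type*} (g : (N → Option Bool) → Option Bool) : Prop :=
  ∀ R : N → Option Bool, g (fun i => Option.map not (R i)) = Option.map not (g R)

/-- The ranking of outcomes by a voter with strict preference for `x`:
`some x ≻ none ≻ some (!x)`. -/
def rankOutcome (x : Bool) : Option Bool → ℕ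
  | none => 1
  | some y => if y = x then 2 else 0

/-- A full-domain rule is strategy-proof if no voter with a strict preference can
obtain a strictly better-ranked outcome by misreporting. -/
def FullStrategyProof {N : Type*} [DecidableEq N]
    (g : (N → Option Bool) → Option Bool) : Prop :=
  ∀ (R : N → Option Bool) (i : N) (x : Bool), R i = some x →
    ∀ r : Option Bool, rankOutcome x (g (Function.update R i r)) ≤ rankOutcome x (g R)

/-- `g` is the M-winning coalition rule with default `f` associated with `𝒞`. -/
def IsMWCFullRule {N : Type*} (𝒞 : Set (Finset N))
    (f g : (N → Option Bool) → Option Bool) : Prop :=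
  ∀ R : N → Option Bool,
    (∀ x : Bool, (∃ C ∈ 𝒞, ∀ i ∈ C, R i = some x) → g R = some x) ∧
    ((¬ ∃ x : Bool, ∃ C ∈ 𝒞, ∀ i ∈ C, R i = some x) → g R = f R)

/-- `g` is the sequential unanimity rule with default `f` associated with `S`. -/
def IsSUFullRule {N : Type*} {K : ℕ} (S : Fin K → Finset N)
    (f g : (N → Option Bool) → Option Bool) : Prop :=
  ∀ R : N → Option Bool,
    (∀ x : Bool, (∃ k : Fin K, (∀ i ∈ S k, R i = some x) ∧
        ∀ l < k, ∃ i ∈ S l, R i = some x) → g R = some x) ∧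
    ((¬ ∃ x : Bool, ∃ k : Fin K, (∀ i ∈ S k, R i = some x) ∧
        ∀ l < k, ∃ i ∈ S l, R i = some x) → g R = f R)

/-- Theorem 4 (invariant form): under the Algorithm-1 invariant, the M-winning coalition
rule with default f and the sequential unanimity rule with default f coincide at every
full profile. -/
theorem stmt14 {N : Type*} [Fintype N] [DecidableEq N] {K : ℕ}
    (𝒞 : Set (Finset N)) (h𝒞 : IsMWCS 𝒞)
    (S : Fin (K + 1) → Finset N) (hne : ∀ k, (S k).Nonempty)
    (hinj : Function.Injective S) (hlast : (S (Fin.last K)).card = 1)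
    (hinv : ∀ C ∈ 𝒞, ∃ k : Fin (K + 1), S k ⊆ C ∧ ∀ l < k, (S l ∩ C).Nonempty)
    (f : (N → Option Bool) → Option Bool)
    (hfN : FullNeutral f) (hfSP : FullStrategyProof f)
    (g g' : (N → Option Bool) → Option Bool)
    (hg : IsMWCFullRule 𝒞 f g) (hg' : IsSUFullRule S f g')
    (R : N → Option Bool) : g R = g' R := by
  obtain ⟨h1, h2, h3, h4⟩ := h𝒞
  have key : ∀ x : Bool, (∃ k : Fin (K+1), (∀ i ∈ S k, R i = some x) ∧
      ∀ l < k, ∃ i ∈ S l, R i = some x) ↔ (∃ C ∈ 𝒞, ∀ i ∈ C, R i = some x) := by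
    intro x
    constructor
    · rintro ⟨k, hk, hl⟩
      have := (h4 (Finset.univ.filter (fun i => R i = some x))).mpr ?_
      · obtain ⟨C', hC', hsub⟩ := this
        exact ⟨C', hC', fun i hi => (Finset.mem_filter.mp (hsub hi)).2⟩
      · intro C hC
        obtain ⟨m, hm, hmL⟩ := hinv C hC
        rcases lt_trichotomy m k with h | h | h
        · obtain ⟨i, hi⟩ := hl m h
          exact ⟨i, Finset.mem_inter.mpr ⟨Finset.mem_filter.mpr ⟨Finset.mem_univ i, hi.2⟩,
            hm hi.1⟩⟩
        · subst h
          obtain ⟨i, hi⟩ := hne m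
          exact ⟨i, Finset.mem_inter.mpr ⟨Finset.mem_filter.mpr ⟨Finset.mem_univ i, hk i hi⟩,
            hm hi⟩⟩
        · obtain ⟨i, hi⟩ := hmL k h
          rw [Finset.mem_inter] at hi
          exact ⟨i, Finset.mem_inter.mpr ⟨Finset.mem_filter.mpr ⟨Finset.mem_univ i, hk i hi.1⟩,
            hi.2⟩⟩
    · rintro ⟨C, hC, hCx⟩
      obtain ⟨k, hsub, hl⟩ := hinv C hC
      refine ⟨k, fun i hi => hCx i (hsub hi), fun l hlk => ?_⟩
      obtain ⟨i, hi⟩ := hl l hlk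
      rw [Finset.mem_inter] at hi
      exact ⟨i, hi.1, hCx i hi.2⟩
  by_cases hP : ∃ x : Bool, ∃ C ∈ 𝒞, ∀ i ∈ C, R i = some x
  · obtain ⟨x, hx⟩ := hP
    rw [(hg R).1 x hx, (hg' R).1 x ((key x).mpr hx)]
  · have hQ : ¬ ∃ x : Bool, ∃ k : Fin (K+1), (∀ i ∈ S k, R i = some x) ∧
        ∀ l < k, ∃ i ∈ S l, R i = some x := by
      rintro ⟨x, hx⟩; exact hP ⟨x, (key x).mp hx⟩
    rw [(hg R).2 hP, (hg' R).2 hQ]
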